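/- Let φ : W → (ZMod 2) × (ZMod 2) be the group homomorphism with φ(s₁) = φ(s₃) = (1,0) and φ(s₂) = φ(s₄) = (0,1). Then the kernel of φ equals the subgroup of W generated by the two elements s₁s₃ and s₂s₄. -/

import Mathlib

/-- The Coxeter matrix of the 4-cycle: off-diagonal entries are `2` for cyclically adjacent
indices and `0` (i.e. `∞`) for the two opposite pairs. -/
def C4 : CoxeterMatrix (Fin 4) where
  M := Matrix.of fun i j : Fin 4 ↦
    if i = j then 1
    else if (i.val + 1) % 4 = j.val ∨ (j.val + 1) % 4 = i.val then 2 else 0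
  off_diagonal := by simp only [Matrix.of_apply]; decide

/-- `W`, the right-angled Coxeter group of the 4-cycle. -/
abbrev W : Type := C4.Group

/-- The simple reflections `s₁, s₂, s₃, s₄` of `W`, indexed by `Fin 4`
(so `s 0 = s₁`, `s 1 = s₂`, `s 2 = s₃`, `s 3 = s₄`). -/
def s (i : Fin 4) : W := C4.simple i

noncomputable def cs : CoxeterSystem C4 W := C4.toCoxeterSystem

lemma s_eq (i : Fin 4) : cs.simple i = s i := rfl

lemma s_sq (i : Fin 4) : s i * s i = 1 := by
  rw [← s_eq]; exact cs.simple_mul_simple_self i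

lemma s_inv (i : Fin 4) : (s i)⁻¹ = s i :=
  inv_eq_of_mul_eq_one_right (s_sq i)

lemma s_comm (i j : Fin 4) (h : C4 i j = 2) : s i * s j = s j * s i := by
  have h2 : (s i * s j) * (s i * s j) = 1 := by
    have := cs.simple_mul_simple_pow i j
    rw [h, sq, s_eq, s_eq] at this
    exact this
  have := eq_inv_of_mul_eq_one_left h2
  rw [mul_inv_rev, s_inv, s_inv] at this
  exact this


lemma comm01 : s 0 * s 1 = s 1 * s 0 := s_comm 0 1 (by decide)
lemma comm12 : s 1 * s 2 = s 2 * s 1 := s_comm 1 2 (by decide)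
lemma comm23 : s 2 * s 3 = s 3 * s 2 := s_comm 2 3 (by decide)
lemma comm30 : s 3 * s 0 = s 0 * s 3 := s_comm 3 0 (by decide)

/-- coset representatives -/
def rep (u v : Bool) : W := (cond u (s 0) 1) * (cond v (s 1) 1)

lemma L0 (u v : Bool) : s 0 * rep u v = rep (!u) v := by
  cases u <;> simp [rep, ← mul_assoc, s_sq]

lemma L1 (u v : Bool) : s 1 * rep u v = rep u (!v) := by
  cases u <;> cases v <;>
    simp [rep, ← mul_assoc, s_sq, comm01]

lemma L2 (u v : Bool) : s 2 * rep u v = (s 2 * s 0) * rep (!u) v := by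
  rw [← L0 u v, mul_assoc, ← mul_assoc (s 0), s_sq, one_mul]

lemma L3 (u v : Bool) : s 3 * rep u v = (s 3 * s 1) * rep u (!v) := by
  rw [← L1 u v, mul_assoc, ← mul_assoc (s 1), s_sq, one_mul]

noncomputable abbrev H : Subgroup W := Subgroup.closure {s 0 * s 2, s 1 * s 3}

lemma a_inv_mem : s 2 * s 0 ∈ H := by
  have : s 2 * s 0 = (s 0 * s 2)⁻¹ := by rw [mul_inv_rev, s_inv, s_inv]
  rw [this]
  exact inv_mem (Subgroup.subset_closure (by simp))

lemma b_inv_mem : s 3 * s 1 ∈ H := by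
  have : s 3 * s 1 = (s 1 * s 3)⁻¹ := by rw [mul_inv_rev, s_inv, s_inv]
  rw [this]
  exact inv_mem (Subgroup.subset_closure (by simp))

lemma s_cancel (i : Fin 4) (w : W) : s i * (s i * w) = w := by
  rw [← mul_assoc, s_sq, one_mul]

lemma conjH (i : Fin 4) {h : W} (hh : h ∈ H) : s i * h * s i ∈ H := by
  induction hh using Subgroup.closure_induction with
  | one => simpa [s_sq] using one_mem H
  | mul x y hx hy px py =>
      have e : s i * (x * y) * s i = (s i * x * s i) * (s i * y * s i) := by
        simp only [mul_assoc]; rw [s_cancel]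
      rw [e]; exact mul_mem px py
  | inv x hx px =>
      have e : s i * x⁻¹ * s i = (s i * x * s i)⁻¹ := by
        rw [mul_inv_rev, mul_inv_rev, s_inv, ← mul_assoc]
      rw [e]; exact inv_mem px
  | mem x hx =>
      have amem : s 0 * s 2 ∈ H := Subgroup.subset_closure (by simp)
      have bmem : s 1 * s 3 ∈ H := Subgroup.subset_closure (by simp)
      have hi : i = 0 ∨ i = 1 ∨ i = 2 ∨ i = 3 := by fin_cases i <;> simp
      rcases hx with rfl | rfl <;> rcases hi with rfl | rfl | rfl | rfl
      · show s 0 * (s 0 * s 2) * s 0 ∈ H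
        have e : s 0 * (s 0 * s 2) * s 0 = s 2 * s 0 := by
          rw [← mul_assoc, s_sq, one_mul]
        rw [e]; exact a_inv_mem
      · show s 1 * (s 0 * s 2) * s 1 ∈ H
        have e : s 1 * (s 0 * s 2) * s 1 = s 0 * s 2 := by
          rw [← mul_assoc, ← comm01, mul_assoc (s 0), mul_assoc (s 0), comm12, ← mul_assoc,
            ← mul_assoc, mul_assoc, s_sq, mul_one]
        rw [e]; exact amem
      · show s 2 * (s 0 * s 2) * s 2 ∈ H
        have e : s 2 * (s 0 * s 2) * s 2 = s 2 * s 0 := by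
          rw [mul_assoc, mul_assoc, s_sq, mul_one]
        rw [e]; exact a_inv_mem
      · show s 3 * (s 0 * s 2) * s 3 ∈ H
        have e : s 3 * (s 0 * s 2) * s 3 = s 0 * s 2 := by
          rw [← mul_assoc, comm30, mul_assoc (s 0), mul_assoc (s 0), ← comm23, ← mul_assoc,
            ← mul_assoc, mul_assoc, s_sq, mul_one]
        rw [e]; exact amem
      · show s 0 * (s 1 * s 3) * s 0 ∈ H
        have e : s 0 * (s 1 * s 3) * s 0 = s 1 * s 3 := by
          rw [← mul_assoc, comm01, mul_assoc (s 1), mul_assoc (s 1), ← comm30, ← mul_assoc,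
            ← mul_assoc, mul_assoc, s_sq, mul_one]
        rw [e]; exact bmem
      · show s 1 * (s 1 * s 3) * s 1 ∈ H
        have e : s 1 * (s 1 * s 3) * s 1 = s 3 * s 1 := by
          rw [← mul_assoc, s_sq, one_mul]
        rw [e]; exact b_inv_mem
      · show s 2 * (s 1 * s 3) * s 2 ∈ H
        have e : s 2 * (s 1 * s 3) * s 2 = s 1 * s 3 := by
          rw [← mul_assoc, ← comm12, mul_assoc (s 1), mul_assoc (s 1), comm23, ← mul_assoc,
            ← mul_assoc, mul_assoc, s_sq, mul_one]
        rw [e]; exact bmem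
      · show s 3 * (s 1 * s 3) * s 3 ∈ H
        have e : s 3 * (s 1 * s 3) * s 3 = s 3 * s 1 := by
          rw [mul_assoc, mul_assoc, s_sq, mul_one]
        rw [e]; exact b_inv_mem

lemma decomp (w : W) : ∃ h ∈ H, ∃ u v : Bool, w = h * rep u v := by
  induction w using cs.simple_induction_left with
  | one => exact ⟨1, one_mem H, false, false, by simp [rep]⟩
  | mul_simple_left w i ih =>
      obtain ⟨h, hh, u, v, rfl⟩ := ih
      have key : cs.simple i * (h * rep u v) = (s i * h * s i) * (s i * rep u v) := by
        rw [s_eq, mul_assoc, s_cancel, ← mul_assoc]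
      rw [key]
      have hi : i = 0 ∨ i = 1 ∨ i = 2 ∨ i = 3 := by fin_cases i <;> simp
      rcases hi with rfl | rfl | rfl | rfl
      · exact ⟨s 0 * h * s 0, conjH 0 hh, !u, v, by rw [L0]⟩
      · exact ⟨s 1 * h * s 1, conjH 1 hh, u, !v, by rw [L1]⟩
      · exact ⟨(s 2 * h * s 2) * (s 2 * s 0), mul_mem (conjH 2 hh) a_inv_mem, !u, v, by
          rw [L2, ← mul_assoc]⟩
      · exact ⟨(s 3 * h * s 3) * (s 3 * s 1), mul_mem (conjH 3 hh) b_inv_mem, u, !v, by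
          rw [L3, ← mul_assoc]⟩

/-- If `φ : W → (ZMod 2) × (ZMod 2)` is the group homomorphism with `φ(s₁) = φ(s₃) = (1,0)`
and `φ(s₂) = φ(s₄) = (0,1)`, then `ker φ` is the subgroup of `W` generated by
`s₁s₃` and `s₂s₄`. -/
theorem stmt2 (φ : W →* Multiplicative (ZMod 2 × ZMod 2))
    (h1 : φ (s 0) = Multiplicative.ofAdd (1, 0)) (h2 : φ (s 1) = Multiplicative.ofAdd (0, 1))
    (h3 : φ (s 2) = Multiplicative.ofAdd (1, 0)) (h4 : φ (s 3) = Multiplicative.ofAdd (0, 1)) :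
    φ.ker = Subgroup.closure {s 0 * s 2, s 1 * s 3} := by
  have hH : Subgroup.closure {s 0 * s 2, s 1 * s 3} ≤ φ.ker := by
    rw [Subgroup.closure_le]
    rintro x (rfl | rfl)
    · show φ (s 0 * s 2) = 1
      rw [map_mul, h1, h3]; decide
    · show φ (s 1 * s 3) = 1
      rw [map_mul, h2, h4]; decide
  refine le_antisymm ?_ hH
  intro w hw
  obtain ⟨h, hh, u, v, rfl⟩ := decomp w
  have hker : φ h = 1 := hH hh
  rw [MonoidHom.mem_ker, map_mul, hker, one_mul] at hw
  cases u <;> cases v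
  · have : rep false false = 1 := by simp [rep]
    rw [this, mul_one]; exact hh
  · exfalso
    rw [show rep false true = s 1 from by simp [rep], h2] at hw
    exact absurd hw (by decide)
  · exfalso
    rw [show rep true false = s 0 from by simp [rep], h1] at hw
    exact absurd hw (by decide)
  · exfalso
    rw [show rep true true = s 0 * s 1 from by simp [rep], map_mul, h1, h2] at hw
    exact absurd hw (by decide)
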